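/- Let z ∈ ℂ_p with |z−1|_p ≥ 1, k ≥ 1, and r ≥ 0. Then ∫_{ℤ_p} x^r dμ_{k,z} = k · ∫_{ℤ_p} x^{r+k−1} dμ_{1,z}, and the same identity holds with ℤ_p replaced by ℤ_p^*. -/

import Mathlib

/-- The twisted Bernoulli polynomial `β_k(x,y)`, defined (for `y ≠ 1`) by the
exponential generating function `t·e^{xt}/(y·e^t − 1) = Σ_{k≥0} β_k(x,y) t^k/k!`. -/
noncomputable def twistedBernoulli {K : Type*} [Field K] [CharZero K] (k : ℕ) (x y : K) : K :=
  (k.factorial : K) *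
    PowerSeries.coeff (R := K) k
      (PowerSeries.X * PowerSeries.rescale x (PowerSeries.exp K) *
        (PowerSeries.C (R := K) y * PowerSeries.exp K - 1)⁻¹)

open PowerSeries Finset Filter

open PowerSeries Finset

noncomputable def tb {K : Type*} [Field K] [CharZero K] (i : ℕ) (y : K) : K :=
  (i.factorial : K) *
    PowerSeries.coeff (R := K) i (PowerSeries.X * (PowerSeries.C (R := K) y * PowerSeries.exp K - 1)⁻¹)

section Alg
variable {K : Type*} [Field K] [CharZero K] {y : K}

lemma constCoeff_den : constantCoeff (R := K) (C (R := K) y * exp K - 1) = y - 1 := by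
  simp [map_sub, map_mul, constantCoeff_exp]

lemma coeff_exp_eq (i : ℕ) : coeff (R := K) i (exp K) = ((i.factorial : K))⁻¹ := by
  rw [coeff_exp, map_div₀, map_one, map_natCast]
  exact one_div _

lemma tb_zero : tb 0 y = 0 := by
  simp [tb, PowerSeries.coeff_zero_eq_constantCoeff, map_mul]

lemma tb_rec (hy : y ≠ 1) (n : ℕ) :
    (y - 1) * tb n y
      = (if n = 1 then (1 : K) else 0) - y * ∑ j ∈ range n, (n.choose j : K) * tb j y := by
  have hne : constantCoeff (R := K) (C (R := K) y * exp K - 1) ≠ 0 := by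
    rw [constCoeff_den]; exact sub_ne_zero.mpr hy
  set g : K⟦X⟧ := X * (C (R := K) y * exp K - 1)⁻¹ with hg
  have hmul : (C (R := K) y * exp K - 1) * g = X := by
    rw [hg, mul_left_comm, PowerSeries.mul_inv_cancel _ hne, mul_one]
  have hc := congrArg (coeff (R := K) n) hmul
  rw [sub_mul, one_mul, map_sub, mul_assoc, coeff_C_mul, coeff_mul, coeff_X,
    Finset.Nat.sum_antidiagonal_eq_sum_range_succ_mk, Finset.sum_range_succ'] at hc
  have hrefl : ∑ i ∈ range n, coeff (R := K) (i + 1) (exp K) * coeff (R := K) (n - (i + 1)) g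
      = ∑ j ∈ range n, ((n - j).factorial : K)⁻¹ * coeff (R := K) j g := by
    refine (Finset.sum_range_reflect
      (fun i => coeff (R := K) (i + 1) (exp K) * coeff (R := K) (n - (i + 1)) g) n).symm.trans ?_
    refine Finset.sum_congr rfl fun j hj => ?_
    have hj' : j < n := mem_range.mp hj
    have h1 : n - 1 - j + 1 = n - j := by omega
    have h2 : n - (n - j) = j := by omega
    rw [h1, h2, coeff_exp_eq]
  rw [hrefl, coeff_exp_eq, Nat.sub_zero] at hc
  simp only [Nat.factorial_zero, Nat.cast_one, inv_one, one_mul] at hc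
  have key : ∀ j ∈ range n,
      (n.factorial : K) * (((n - j).factorial : K)⁻¹ * coeff (R := K) j g)
        = (n.choose j : K) * tb j y := by
    intro j hj
    have hjn : j ≤ n := le_of_lt (mem_range.mp hj)
    have hfac : (n.factorial : K)
        = (n.choose j : K) * (j.factorial : K) * ((n - j).factorial : K) := by
      exact_mod_cast congrArg (Nat.cast (R := K))
        (Nat.choose_mul_factorial_mul_factorial hjn).symm
    have hnz : ((n - j).factorial : K) ≠ 0 := by
      exact_mod_cast (Nat.factorial_pos _).ne'
    rw [tb, hfac]
    field_simp
    ring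
  have hkey : (n.factorial : K) * ∑ j ∈ range n, ((n - j).factorial : K)⁻¹ * coeff (R := K) j g
      = ∑ j ∈ range n, (n.choose j : K) * tb j y := by
    rw [Finset.mul_sum]; exact Finset.sum_congr rfl key
  have hδ : (n.factorial : K) * (if n = 1 then (1 : K) else 0)
      = (if n = 1 then (1 : K) else 0) := by
    split
    · next h => subst h; norm_num
    · simp
  rw [tb]
  linear_combination (n.factorial : K) * hc - y * hkey + hδ

lemma tb_one (hy : y ≠ 1) : tb 1 y = (y - 1)⁻¹ := by
  have h := tb_rec hy 1
  simp [tb_zero] at h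
  have hne : y - 1 ≠ 0 := sub_ne_zero.mpr hy
  field_simp
  linear_combination h

lemma beta_eq (hy : y ≠ 1) (k : ℕ) (x : K) :
    twistedBernoulli k x y
      = ∑ i ∈ range (k + 1), (k.choose i : K) * tb i y * x ^ (k - i) := by
  have harr : X * rescale x (exp K) * (C (R := K) y * exp K - 1)⁻¹
      = rescale x (exp K) * (X * (C (R := K) y * exp K - 1)⁻¹) := by ring
  rw [twistedBernoulli, harr, coeff_mul, Finset.Nat.sum_antidiagonal_eq_sum_range_succ_mk,
    Finset.mul_sum,
    ← Finset.sum_range_reflect (fun i => (k.choose i : K) * tb i y * x ^ (k - i)) (k + 1)]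
  refine Finset.sum_congr rfl fun i hi => ?_
  have hik : i ≤ k := Nat.lt_succ_iff.mp (mem_range.mp hi)
  have h1 : k + 1 - 1 - i = k - i := by omega
  have h2 : k - (k - i) = i := by omega
  rw [h1, coeff_rescale, coeff_exp_eq, tb, h2]
  have hfac : (k.factorial : K)
      = (k.choose (k - i) : K) * ((k - i).factorial : K) * (i.factorial : K) := by
    have := Nat.choose_mul_factorial_mul_factorial (Nat.sub_le k i)
    rw [h2] at this
    exact_mod_cast congrArg (Nat.cast (R := K)) this.symm
  have hnz : (i.factorial : K) ≠ 0 := by exact_mod_cast (Nat.factorial_pos _).ne'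
  rw [hfac]
  field_simp

lemma beta_one (hy : y ≠ 1) (x : K) : twistedBernoulli 1 x y = (y - 1)⁻¹ := by
  rw [beta_eq hy]
  simp [Finset.sum_range_succ, tb_zero, tb_one hy]

end Alg

section Norm
variable {K : Type*} [NormedField K] [IsUltrametricDist K]
variable {K : Type*} [NormedField K] [IsUltrametricDist K]

lemma norm_sub_le_max' (a b : K) : ‖a - b‖ ≤ max ‖a‖ ‖b‖ := by
  rw [sub_eq_add_neg]
  simpa using IsUltrametricDist.norm_add_le_max a (-b)

lemma norm_le_norm_sub_one {y : K} (hy : 1 ≤ ‖y - 1‖) : ‖y‖ ≤ ‖y - 1‖ := by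
  calc ‖y‖ = ‖(y - 1) + 1‖ := by ring_nf
  _ ≤ max ‖y - 1‖ ‖(1 : K)‖ := IsUltrametricDist.norm_add_le_max _ _
  _ = ‖y - 1‖ := by rw [norm_one, max_eq_left hy]

lemma norm_pow_sub_one_aux (q : ℕ) (hp : (q + 1).Prime)
    (hnorm : ‖((q + 1 : ℕ) : K)‖ = ((q + 1 : ℕ) : ℝ)⁻¹) {z : K} (hz : 1 ≤ ‖z - 1‖) :
    ‖z - 1‖ ≤ ‖z ^ (q + 1) - 1‖ := by
  set w : K := z - 1 with hw
  have hw0 : (0:ℝ) < ‖w‖ := lt_of_lt_of_le one_pos hz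
  have hexp : z ^ (q + 1) - 1
      = w ^ (q + 1) + ∑ i ∈ range q, w ^ (i + 1) * ((q + 1).choose (i + 1) : K) := by
    have hzw : z = w + 1 := by rw [hw]; ring
    rw [hzw, add_pow]
    simp only [one_pow, mul_one]
    rw [Finset.sum_range_succ', Finset.sum_range_succ]
    simp only [Nat.choose_self, Nat.cast_one, mul_one, pow_zero, Nat.choose_zero_right, one_mul]
    ring
  have hS : ‖∑ i ∈ range q, w ^ (i + 1) * ((q + 1).choose (i + 1) : K)‖
      ≤ ‖w‖ ^ (q + 1) * ((q + 1 : ℕ) : ℝ)⁻¹ := by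
    refine IsUltrametricDist.norm_sum_le_of_forall_le_of_nonneg (by positivity) fun i hi => ?_
    have hi' : i < q := mem_range.mp hi
    obtain ⟨m, hm⟩ := hp.dvd_choose_self (Nat.succ_ne_zero i) (by omega)
    rw [norm_mul, norm_pow, hm, Nat.cast_mul, norm_mul, hnorm]
    have h1 : ‖w‖ ^ (i + 1) ≤ ‖w‖ ^ (q + 1) := pow_le_pow_right₀ hz (by omega)
    have h2 : ‖((m : ℕ) : K)‖ ≤ 1 := IsUltrametricDist.norm_natCast_le_one K m
    calc ‖w‖ ^ (i+1) * (((q+1:ℕ):ℝ)⁻¹ * ‖((m:ℕ):K)‖)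
        ≤ ‖w‖ ^ (q+1) * (((q+1:ℕ):ℝ)⁻¹ * 1) := by
          apply mul_le_mul h1 _ (by positivity) (by positivity)
          exact mul_le_mul_of_nonneg_left h2 (by positivity)
      _ = ‖w‖ ^ (q+1) * ((q+1:ℕ):ℝ)⁻¹ := by ring
  have hSlt : ‖∑ i ∈ range q, w ^ (i + 1) * ((q + 1).choose (i + 1) : K)‖ < ‖w ^ (q + 1)‖ := by
    rw [norm_pow]
    refine lt_of_le_of_lt hS ?_
    have : ((q + 1 : ℕ) : ℝ)⁻¹ < 1 := by
      rw [inv_lt_one_iff₀]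
      right
      exact_mod_cast hp.one_lt
    exact mul_lt_of_lt_one_right (by positivity) this
  have heq : ‖z ^ (q + 1) - 1‖ = ‖w‖ ^ (q + 1) := by
    rw [hexp, IsUltrametricDist.norm_add_eq_max_of_norm_ne_norm (ne_of_gt hSlt),
      max_eq_left hSlt.le, norm_pow]
  rw [heq]
  exact le_self_pow₀ hz (Nat.succ_ne_zero q)


variable [CharZero K]

lemma tb_bound {y : K} (hy1 : 1 ≤ ‖y - 1‖) (n : ℕ) : ‖tb n y‖ ≤ ‖y - 1‖⁻¹ := by
  induction n using Nat.strong_induction_on with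
  | _ n ih =>
    have hy : y ≠ 1 := by
      intro h
      rw [h] at hy1
      simp at hy1
      linarith
    have hne : y - 1 ≠ 0 := sub_ne_zero.mpr hy
    have h := tb_rec hy n
    have htb : tb n y = (y - 1)⁻¹ *
        ((if n = 1 then (1 : K) else 0) - y * ∑ j ∈ range n, (n.choose j : K) * tb j y) := by
      field_simp
      linear_combination h
    rw [htb, norm_mul, norm_inv]
    refine mul_le_of_le_one_right (inv_nonneg.2 (norm_nonneg _)) ?_
    refine le_trans (norm_sub_le_max' _ _) (max_le ?_ ?_)
    · split <;> simp
    · rw [norm_mul]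
      have hpos : (0:ℝ) < ‖y - 1‖ := lt_of_lt_of_le one_pos hy1
      have hsum : ‖∑ j ∈ range n, (n.choose j : K) * tb j y‖ ≤ ‖y - 1‖⁻¹ := by
        refine IsUltrametricDist.norm_sum_le_of_forall_le_of_nonneg (by positivity) fun j hj => ?_
        rw [norm_mul]
        calc ‖(n.choose j : K)‖ * ‖tb j y‖ ≤ 1 * ‖y - 1‖⁻¹ :=
              mul_le_mul (IsUltrametricDist.norm_natCast_le_one K _)
                (ih j (mem_range.mp hj)) (norm_nonneg _) zero_le_one
          _ = ‖y - 1‖⁻¹ := one_mul _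
      calc ‖y‖ * ‖∑ j ∈ range n, (n.choose j : K) * tb j y‖
          ≤ ‖y - 1‖ * ‖y - 1‖⁻¹ :=
            mul_le_mul (norm_le_norm_sub_one hy1) hsum (norm_nonneg _) hpos.le
        _ = 1 := mul_inv_cancel₀ hpos.ne'

variable (p : ℕ) (hp : p.Prime) (hnorm : ‖((p : ℕ) : K)‖ = ((p : ℕ) : ℝ)⁻¹)

include hp hnorm in
lemma norm_pow_p_sub_one {z : K} (hz : 1 ≤ ‖z - 1‖) : ‖z - 1‖ ≤ ‖z ^ p - 1‖ := by
  obtain ⟨q, rfl⟩ : ∃ q, p = q + 1 := ⟨p - 1, by have := hp.pos; omega⟩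
  exact norm_pow_sub_one_aux q hp hnorm hz

include hp hnorm in
lemma norm_pow_pN_sub_one (N : ℕ) : ∀ z : K, 1 ≤ ‖z - 1‖ → 1 ≤ ‖z ^ (p ^ N) - 1‖ := by
  induction N with
  | zero => intro z hz; simpa using hz
  | succ N ih =>
    intro z hz
    have h1 : z ^ p ^ (N + 1) = (z ^ p) ^ p ^ N := by
      rw [← pow_mul, pow_succ, mul_comm]
    rw [h1]
    exact ih (z ^ p) (le_trans hz (norm_pow_p_sub_one p hp hnorm hz))

include hp hnorm in
lemma key_norm_le {z : K} (hz : 1 ≤ ‖z - 1‖) (N a : ℕ) (ha : a ≤ p ^ N) :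
    ‖z‖ ^ a ≤ ‖z ^ p ^ N - 1‖ := by
  rcases le_or_gt ‖z‖ 1 with h | h
  · exact le_trans (pow_le_one₀ (norm_nonneg _) h) (norm_pow_pN_sub_one p hp hnorm N z hz)
  · have hne : ‖z ^ p ^ N‖ ≠ ‖(-1 : K)‖ := by
      rw [norm_pow, norm_neg, norm_one]
      exact ne_of_gt (one_lt_pow₀ h (pow_ne_zero N hp.ne_zero))
    have heq : ‖z ^ p ^ N - 1‖ = ‖z‖ ^ p ^ N := by
      rw [sub_eq_add_neg, IsUltrametricDist.norm_add_eq_max_of_norm_ne_norm hne, norm_pow]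
      rw [norm_neg, norm_one]
      exact max_eq_left (one_le_pow₀ h.le)
    rw [heq]
    exact pow_le_pow_right₀ h.le ha

include hp hnorm in
lemma zpow_ne_one {z : K} (hz : 1 ≤ ‖z - 1‖) (N : ℕ) : z ^ p ^ N ≠ 1 := by
  intro h
  have := norm_pow_pN_sub_one p hp hnorm N z hz
  rw [h, sub_self, norm_zero] at this
  linarith

end Norm


section Sums
variable {M : Type*} [AddCommMonoid M]

lemma sum_range_mul_eq (m n : ℕ) (f : ℕ → M) :
    ∑ a ∈ range (m * n), f a = ∑ j ∈ range n, ∑ b ∈ range m, f (m * j + b) := by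
  induction n with
  | zero => simp
  | succ n ih =>
    have h1 : m * (n + 1) = m * n + m := by ring
    rw [h1, Finset.range_eq_Ico,
      ← Finset.sum_Ico_consecutive f (Nat.zero_le (m * n)) (Nat.le_add_right (m * n) m),
      ← Finset.range_eq_Ico, ih, Finset.sum_Ico_eq_sum_range, Finset.sum_range_succ]
    congr 1
    simp only [Nat.add_sub_cancel_left]

lemma sum_filter_dvd (p n : ℕ) (hp : 0 < p) (f : ℕ → M) :
    ∑ a ∈ (range (p * n)).filter (fun a => p ∣ a), f a = ∑ b ∈ range n, f (p * b) := by
  refine Finset.sum_nbij' (fun a => a / p) (fun b => p * b) ?_ ?_ ?_ ?_ ?_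
  · intro a ha
    simp only [mem_filter, mem_range] at ha
    obtain ⟨ha1, c, rfl⟩ := ha
    rw [Nat.mul_div_cancel_left _ hp]
    exact mem_range.mpr (lt_of_mul_lt_mul_left ha1 (Nat.zero_le p))
  · intro b hb
    simp only [mem_filter, mem_range] at hb ⊢
    exact ⟨by exact Nat.mul_lt_mul_left hp |>.mpr hb, Dvd.intro b rfl⟩
  · intro a ha
    simp only [mem_filter] at ha
    exact Nat.mul_div_cancel' ha.2
  · intro b _
    exact Nat.mul_div_cancel_left _ hp
  · intro a ha
    simp only [mem_filter] at ha
    rw [Nat.mul_div_cancel' ha.2]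

end Sums

section Conv
variable {K : Type*} [NormedField K] [IsUltrametricDist K] [CharZero K] [CompleteSpace K]
variable (p : ℕ) (hp : p.Prime) (hnorm : ‖((p : ℕ) : K)‖ = ((p : ℕ) : ℝ)⁻¹)

include hp hnorm in
lemma mu1_conv (m : ℕ) {z : K} (hz : 1 ≤ ‖z - 1‖) :
    ∃ L : K, Filter.Tendsto
      (fun N : ℕ => ∑ a ∈ range (p ^ N), (a : K) ^ m * z ^ a * (z ^ p ^ N - 1)⁻¹)
      Filter.atTop (nhds L) := by
  set S : ℕ → K :=
    fun N => ∑ a ∈ range (p ^ N), (a : K) ^ m * z ^ a * (z ^ p ^ N - 1)⁻¹ with hSdef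
  have key : ∀ N, ‖S N - S (N + 1)‖ ≤ ((p : ℕ) : ℝ)⁻¹ ^ N := by
    intro N
    have hu1 : z ^ p ^ N ≠ 1 := zpow_ne_one p hp hnorm hz N
    have hw1 : 1 ≤ ‖z ^ p ^ (N + 1) - 1‖ := norm_pow_pN_sub_one p hp hnorm (N + 1) z hz
    have hw0 : (0:ℝ) < ‖z ^ p ^ (N + 1) - 1‖ := lt_of_lt_of_le one_pos hw1
    have hwne : z ^ p ^ (N + 1) - 1 ≠ 0 := by
      intro h; rw [h, norm_zero] at hw1; linarith
    have hvne : z ^ p ^ N - 1 ≠ 0 := sub_ne_zero.mpr hu1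
    have hup : (z ^ p ^ N) ^ p = z ^ p ^ (N + 1) := by
      rw [← pow_mul, ← pow_succ]
    have hsplit : S (N + 1)
        = ∑ j ∈ range p, ∑ b ∈ range (p ^ N),
            ((p ^ N * j + b : ℕ) : K) ^ m * z ^ (p ^ N * j + b) * (z ^ p ^ (N + 1) - 1)⁻¹ := by
      rw [hSdef]
      simp only
      rw [pow_succ, sum_range_mul_eq]
    have hgeo : ∀ b : ℕ,
        ∑ j ∈ range p, (b : K) ^ m * z ^ (p ^ N * j + b) * (z ^ p ^ (N + 1) - 1)⁻¹
          = (b : K) ^ m * z ^ b * (z ^ p ^ N - 1)⁻¹ := by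
      intro b
      have h1 : ∀ j, z ^ (p ^ N * j + b) = (z ^ p ^ N) ^ j * z ^ b := by
        intro j; rw [pow_add, pow_mul]
      have h2 : ∑ j ∈ range p, (z ^ p ^ N) ^ j
          = (z ^ p ^ (N + 1) - 1) / (z ^ p ^ N - 1) := by
        rw [geom_sum_eq hu1, hup]
      calc ∑ j ∈ range p, (b : K) ^ m * z ^ (p ^ N * j + b) * (z ^ p ^ (N + 1) - 1)⁻¹
          = (b : K) ^ m * z ^ b * (z ^ p ^ (N + 1) - 1)⁻¹ * ∑ j ∈ range p, (z ^ p ^ N) ^ j := by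
            rw [Finset.mul_sum]
            exact Finset.sum_congr rfl fun j _ => by rw [h1 j]; ring
        _ = (b : K) ^ m * z ^ b * (z ^ p ^ N - 1)⁻¹ := by
            rw [h2]; field_simp
    have hdiff : S N - S (N + 1)
        = ∑ b ∈ range (p ^ N), ∑ j ∈ range p,
            (((b : K) ^ m - ((p ^ N * j + b : ℕ) : K) ^ m) * z ^ (p ^ N * j + b)
              * (z ^ p ^ (N + 1) - 1)⁻¹) := by
      rw [hsplit, Finset.sum_comm, hSdef]
      simp only
      rw [← Finset.sum_sub_distrib]
      refine Finset.sum_congr rfl fun b _ => ?_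
      rw [← hgeo b, ← Finset.sum_sub_distrib]
      exact Finset.sum_congr rfl fun j _ => by ring
    rw [hdiff]
    have hppos : (0:ℝ) ≤ ((p : ℕ) : ℝ)⁻¹ ^ N := by positivity
    refine IsUltrametricDist.norm_sum_le_of_forall_le_of_nonneg hppos fun b hb => ?_
    refine IsUltrametricDist.norm_sum_le_of_forall_le_of_nonneg hppos fun j hj => ?_
    have hb' : b < p ^ N := mem_range.mp hb
    have hj' : j < p := mem_range.mp hj
    set A : ℕ := p ^ N * j + b with hA
    have hAle : A ≤ p ^ (N + 1) := by
      have : p ^ N * j + b < p ^ N * j + p ^ N := by omega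
      have h2 : p ^ N * j + p ^ N = p ^ N * (j + 1) := by ring
      have h3 : p ^ N * (j + 1) ≤ p ^ N * p := Nat.mul_le_mul_left _ (by omega)
      rw [pow_succ]
      omega
    obtain ⟨c, hc⟩ : ((p : ℤ)) ^ N ∣ (A : ℤ) ^ m - (b : ℤ) ^ m := by
      refine dvd_trans ?_ (sub_dvd_pow_sub_pow (A : ℤ) (b : ℤ) m)
      refine Dvd.intro j ?_
      rw [hA]
      push_cast
      ring
    have hcast : (b : K) ^ m - (A : K) ^ m = -(((p : ℕ) : K) ^ N * (c : K)) := by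
      have h6 := congrArg (fun t : ℤ => (t : K)) hc
      push_cast at h6
      linear_combination -h6
    rw [norm_mul, norm_mul, hcast, norm_neg, norm_mul, norm_pow, hnorm]
    have h5 : ‖z ^ A‖ * ‖(z ^ p ^ (N + 1) - 1)⁻¹‖ ≤ 1 := by
      rw [norm_inv, norm_pow, ← div_eq_mul_inv, div_le_one hw0]
      exact key_norm_le p hp hnorm hz (N + 1) A hAle
    have hfin : ‖(c : K)‖ * (‖z ^ A‖ * ‖(z ^ p ^ (N + 1) - 1)⁻¹‖) ≤ 1 := by
      calc ‖(c : K)‖ * (‖z ^ A‖ * ‖(z ^ p ^ (N + 1) - 1)⁻¹‖) ≤ 1 * 1 :=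
            mul_le_mul (IsUltrametricDist.norm_intCast_le_one K c) h5 (by positivity) zero_le_one
        _ = 1 := one_mul 1
    calc ((p : ℕ) : ℝ)⁻¹ ^ N * ‖(c : K)‖ * ‖z ^ A‖ * ‖(z ^ p ^ (N + 1) - 1)⁻¹‖
        = ((p : ℕ) : ℝ)⁻¹ ^ N * (‖(c : K)‖ * (‖z ^ A‖ * ‖(z ^ p ^ (N + 1) - 1)⁻¹‖)) := by ring
      _ ≤ ((p : ℕ) : ℝ)⁻¹ ^ N * 1 := mul_le_mul_of_nonneg_left hfin hppos
      _ = ((p : ℕ) : ℝ)⁻¹ ^ N := mul_one _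
  refine cauchySeq_tendsto_of_complete (cauchySeq_of_le_geometric ((p : ℕ) : ℝ)⁻¹ 1 ?_ fun N => ?_)
  · rw [inv_lt_one_iff₀]; right; exact_mod_cast hp.one_lt
  · rw [dist_eq_norm, one_mul]; exact key N

end Conv

section Err
variable {K : Type*} [NormedField K] [IsUltrametricDist K] [CharZero K]
variable (p : ℕ) (hp : p.Prime) (hnorm : ‖((p : ℕ) : K)‖ = ((p : ℕ) : ℝ)⁻¹)

include hp hnorm in
lemma per_a (k : ℕ) (hk : 1 ≤ k) (r : ℕ) {z : K} (hz : 1 ≤ ‖z - 1‖) (N a : ℕ)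
    (ha : a ≤ p ^ N) :
    ‖(a : K) ^ r * ((p : K) ^ (N * (k - 1)) * z ^ a *
        twistedBernoulli k ((a : K) / (p : K) ^ N) (z ^ p ^ N))
      - (k : K) * ((a : K) ^ (r + k - 1) * (z ^ a * (z ^ p ^ N - 1)⁻¹))‖
      ≤ ((p : ℕ) : ℝ)⁻¹ ^ N := by
  have hy : z ^ p ^ N ≠ 1 := zpow_ne_one p hp hnorm hz N
  have hy1 : 1 ≤ ‖z ^ p ^ N - 1‖ := norm_pow_pN_sub_one p hp hnorm N z hz
  have hy0 : (0:ℝ) < ‖z ^ p ^ N - 1‖ := lt_of_lt_of_le one_pos hy1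
  have hPne : ((p : K)) ^ N ≠ 0 :=
    pow_ne_zero N (Nat.cast_ne_zero.mpr hp.ne_zero)
  set y : K := z ^ p ^ N with hydef
  have hyne : y - 1 ≠ 0 := sub_ne_zero.mpr hy
  set P : K := (p : K) ^ N with hPdef
  have heq : (a : K) ^ r * ((p : K) ^ (N * (k - 1)) * z ^ a *
        twistedBernoulli k ((a : K) / P) y)
      - (k : K) * ((a : K) ^ (r + k - 1) * (z ^ a * (y - 1)⁻¹))
      = ∑ i ∈ Ico 2 (k + 1),
          ((k.choose i : K) * (a : K) ^ (r + k - i)) * ((tb i y * z ^ a) * P ^ (i - 1)) := by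
    rw [beta_eq hy k, pow_mul, Finset.mul_sum, Finset.mul_sum]
    have hsplit : ∑ i ∈ range (k + 1), (a : K) ^ r *
          (P ^ (k - 1) * z ^ a * ((k.choose i : K) * tb i y * ((a : K) / P) ^ (k - i)))
        = ∑ i ∈ Ico 0 2, (a : K) ^ r *
          (P ^ (k - 1) * z ^ a * ((k.choose i : K) * tb i y * ((a : K) / P) ^ (k - i)))
        + ∑ i ∈ Ico 2 (k + 1), (a : K) ^ r *
          (P ^ (k - 1) * z ^ a * ((k.choose i : K) * tb i y * ((a : K) / P) ^ (k - i))) := by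
      rw [Finset.range_eq_Ico,
        ← Finset.sum_Ico_consecutive _ (Nat.zero_le 2) (by omega : 2 ≤ k + 1)]
    rw [hsplit]
    have h02 : ∑ i ∈ Ico 0 2, (a : K) ^ r *
          (P ^ (k - 1) * z ^ a * ((k.choose i : K) * tb i y * ((a : K) / P) ^ (k - i)))
        = (k : K) * ((a : K) ^ (r + k - 1) * (z ^ a * (y - 1)⁻¹)) := by
      have : Ico 0 2 = range 2 := by rw [Finset.range_eq_Ico]
      rw [this, Finset.sum_range_succ, Finset.sum_range_succ, Finset.sum_range_zero]
      rw [tb_zero, tb_one hy]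
      simp only [mul_zero, zero_mul, zero_add, Nat.choose_one_right]
      have hk1 : k - 1 + 1 = k := by omega
      have hpow : ((a : K) / P) ^ (k - 1) = (a : K) ^ (k - 1) / P ^ (k - 1) := div_pow _ _ _
      have hapow : (a : K) ^ r * (a : K) ^ (k - 1) = (a : K) ^ (r + k - 1) := by
        rw [← pow_add]
        congr 1
        omega
      rw [hpow, ← hapow]
      field_simp
    rw [h02]
    have hterm : ∀ i ∈ Ico 2 (k + 1), (a : K) ^ r *
          (P ^ (k - 1) * z ^ a * ((k.choose i : K) * tb i y * ((a : K) / P) ^ (k - i)))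
        = ((k.choose i : K) * (a : K) ^ (r + k - i)) * ((tb i y * z ^ a) * P ^ (i - 1)) := by
      intro i hi
      have hi' : 2 ≤ i ∧ i ≤ k := by
        rw [Finset.mem_Ico] at hi
        omega
      have hpow : ((a : K) / P) ^ (k - i) = (a : K) ^ (k - i) / P ^ (k - i) := div_pow _ _ _
      have hP1 : P ^ (k - 1) = P ^ (i - 1) * P ^ (k - i) := by
        rw [← pow_add]
        congr 1
        omega
      have hapow : (a : K) ^ r * (a : K) ^ (k - i) = (a : K) ^ (r + k - i) := by
        rw [← pow_add]
        congr 1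
        omega
      rw [hpow, hP1, ← hapow]
      field_simp
    rw [add_comm]
    rw [Finset.sum_congr rfl hterm]
    ring
  rw [heq]
  refine IsUltrametricDist.norm_sum_le_of_forall_le_of_nonneg (by positivity) fun i hi => ?_
  have hi' : 2 ≤ i := (Finset.mem_Ico.mp hi).1
  rw [norm_mul ((k.choose i : K) * (a : K) ^ (r + k - i)) _,
    norm_mul (tb i y * z ^ a) (P ^ (i - 1)), ← mul_assoc]
  have h1 : ‖(k.choose i : K) * (a : K) ^ (r + k - i)‖ ≤ 1 := by
    have hc : ((k.choose i * a ^ (r + k - i) : ℕ) : K)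
        = (k.choose i : K) * (a : K) ^ (r + k - i) := by push_cast; ring
    rw [← hc]
    exact IsUltrametricDist.norm_natCast_le_one K _
  have h2 : ‖tb i y * z ^ a‖ ≤ 1 := by
    rw [norm_mul, norm_pow]
    calc ‖tb i y‖ * ‖z‖ ^ a ≤ ‖y - 1‖⁻¹ * ‖y - 1‖ :=
          mul_le_mul (tb_bound hy1 i) (key_norm_le p hp hnorm hz N a ha) (by positivity) (by positivity)
      _ = 1 := inv_mul_cancel₀ hy0.ne'
  have h3 : ‖P ^ (i - 1)‖ ≤ ((p : ℕ) : ℝ)⁻¹ ^ N := by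
    rw [hPdef, norm_pow, norm_pow, hnorm, ← pow_mul]
    refine pow_le_pow_of_le_one (by positivity) ?_ ?_
    · rw [inv_le_one_iff₀]
      right
      exact_mod_cast hp.one_le
    · have : 1 ≤ i - 1 := by omega
      calc N = N * 1 := (mul_one N).symm
        _ ≤ N * (i - 1) := Nat.mul_le_mul_left N this
  calc ‖(k.choose i : K) * (a : K) ^ (r + k - i)‖ * ‖tb i y * z ^ a‖ * ‖P ^ (i - 1)‖
      ≤ 1 * 1 * (((p : ℕ) : ℝ)⁻¹ ^ N) := by
        refine mul_le_mul (mul_le_mul h1 h2 (norm_nonneg _) zero_le_one) h3 (norm_nonneg _)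
          (by norm_num)
    _ = ((p : ℕ) : ℝ)⁻¹ ^ N := by ring

end Err

section Main
variable {K : Type*} [NormedField K] [IsUltrametricDist K] [CharZero K] [CompleteSpace K]
variable (p : ℕ) (hp : p.Prime) (hnorm : ‖((p : ℕ) : K)‖ = ((p : ℕ) : ℝ)⁻¹)

include hp hnorm in
lemma assemble (k : ℕ) (hk : 1 ≤ k) (r : ℕ) {z : K} (hz : 1 ≤ ‖z - 1‖)
    (s : ℕ → Finset ℕ) (hs : ∀ N, s N ⊆ Finset.range (p ^ N)) {L0 : K}
    (hF : Filter.Tendsto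
      (fun N : ℕ => ∑ a ∈ s N, (a : K) ^ (r + k - 1) * (z ^ a * (z ^ p ^ N - 1)⁻¹))
      Filter.atTop (nhds L0)) :
    Filter.Tendsto (fun N : ℕ => ∑ a ∈ s N, (a : K) ^ r * ((p : K) ^ (N * (k - 1)) * z ^ a *
        twistedBernoulli k ((a : K) / (p : K) ^ N) (z ^ p ^ N)))
      Filter.atTop (nhds ((k : K) * L0)) ∧
    Filter.Tendsto (fun N : ℕ => (k : K) * ∑ a ∈ s N, (a : K) ^ (r + k - 1) * (z ^ a *
        twistedBernoulli 1 ((a : K) / (p : K) ^ N) (z ^ p ^ N)))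
      Filter.atTop (nhds ((k : K) * L0)) := by
  have hG : Filter.Tendsto
      (fun N : ℕ => (k : K) * ∑ a ∈ s N, (a : K) ^ (r + k - 1) * (z ^ a * (z ^ p ^ N - 1)⁻¹))
      Filter.atTop (nhds ((k : K) * L0)) := hF.const_mul _
  have hlt : ((p : ℕ) : ℝ)⁻¹ < 1 := by
    rw [inv_lt_one_iff₀]
    right
    exact_mod_cast hp.one_lt
  constructor
  · have hE : ∀ N : ℕ,
        ‖(∑ a ∈ s N, (a : K) ^ r * ((p : K) ^ (N * (k - 1)) * z ^ a *
            twistedBernoulli k ((a : K) / (p : K) ^ N) (z ^ p ^ N)))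
          - (k : K) * ∑ a ∈ s N, (a : K) ^ (r + k - 1) * (z ^ a * (z ^ p ^ N - 1)⁻¹)‖
          ≤ ((p : ℕ) : ℝ)⁻¹ ^ N := by
      intro N
      rw [Finset.mul_sum, ← Finset.sum_sub_distrib]
      refine IsUltrametricDist.norm_sum_le_of_forall_le_of_nonneg (by positivity) fun a ha => ?_
      exact per_a p hp hnorm k hk r hz N a (le_of_lt (mem_range.mp (hs N ha)))
    have hzero := squeeze_zero_norm hE
      (tendsto_pow_atTop_nhds_zero_of_lt_one (by positivity) hlt)
    have hsum := hG.add hzero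
    rw [add_zero] at hsum
    exact hsum.congr fun N => by ring
  · refine hG.congr fun N => ?_
    congr 1
    refine Finset.sum_congr rfl fun a _ => ?_
    rw [beta_one (zpow_ne_one p hp hnorm hz N)]

end Main

open Filter


open Filter

/-- `∫_{ℤ_p} x^r dμ_{k,z} = k·∫_{ℤ_p} x^{r+k−1} dμ_{1,z}`, and likewise over `ℤ_p^*`:
both integrals (limits of Riemann sums) exist and agree. -/
theorem integral_pow_twistedBernoulli_measure_index_shift
    {K : Type*} [NormedField K] [IsUltrametricDist K] [CharZero K] [CompleteSpace K]
    (p : ℕ) (hp : p.Prime) (hnorm : ‖(p : K)‖ = (p : ℝ)⁻¹)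
    (k : ℕ) (hk : 1 ≤ k) (r : ℕ) (z : K) (hz : 1 ≤ ‖z - 1‖) :
    (∃ L : K,
      Tendsto (fun N : ℕ =>
          ∑ a ∈ Finset.range (p ^ N),
            (a : K) ^ r * ((p : K) ^ (N * (k - 1)) * z ^ a *
              twistedBernoulli k ((a : K) / (p : K) ^ N) (z ^ (p ^ N))))
        atTop (nhds L) ∧
      Tendsto (fun N : ℕ =>
          (k : K) * ∑ a ∈ Finset.range (p ^ N),
            (a : K) ^ (r + k - 1) * (z ^ a *
              twistedBernoulli 1 ((a : K) / (p : K) ^ N) (z ^ (p ^ N))))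
        atTop (nhds L)) ∧
    (∃ L : K,
      Tendsto (fun N : ℕ =>
          ∑ a ∈ (Finset.range (p ^ N)).filter (fun a => ¬ p ∣ a),
            (a : K) ^ r * ((p : K) ^ (N * (k - 1)) * z ^ a *
              twistedBernoulli k ((a : K) / (p : K) ^ N) (z ^ (p ^ N))))
        atTop (nhds L) ∧
      Tendsto (fun N : ℕ =>
          (k : K) * ∑ a ∈ (Finset.range (p ^ N)).filter (fun a => ¬ p ∣ a),
            (a : K) ^ (r + k - 1) * (z ^ a *
              twistedBernoulli 1 ((a : K) / (p : K) ^ N) (z ^ (p ^ N))))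
        atTop (nhds L)) := by

  set m := r + k - 1 with hm
  obtain ⟨L1, hL1⟩ := mu1_conv p hp hnorm m hz
  constructor
  · have hF : Tendsto
        (fun N : ℕ => ∑ a ∈ Finset.range (p ^ N), (a : K) ^ m * (z ^ a * (z ^ p ^ N - 1)⁻¹))
        atTop (nhds L1) :=
      hL1.congr fun N => Finset.sum_congr rfl fun a _ => by ring
    obtain ⟨h1, h2⟩ := assemble p hp hnorm k hk r hz (fun N => Finset.range (p ^ N))
      (fun N => subset_rfl) hF
    exact ⟨(k : K) * L1, h1, h2⟩
  · have hzp : 1 ≤ ‖z ^ p - 1‖ := le_trans hz (norm_pow_p_sub_one p hp hnorm hz)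
    obtain ⟨L2, hL2⟩ := mu1_conv p hp hnorm m hzp
    have hDclosed : ∀ N : ℕ, 1 ≤ N →
        ((p : K) ^ m * ∑ b ∈ Finset.range (p ^ (N - 1)),
            (b : K) ^ m * (z ^ p) ^ b * ((z ^ p) ^ p ^ (N - 1) - 1)⁻¹)
          = ∑ a ∈ (Finset.range (p ^ N)).filter (fun a => p ∣ a),
              (a : K) ^ m * (z ^ a * (z ^ p ^ N - 1)⁻¹) := by
      intro N hN
      have hpN : p ^ N = p * p ^ (N - 1) := by
        rw [← pow_succ']
        congr 1
        omega
      rw [hpN, sum_filter_dvd p _ hp.pos, Finset.mul_sum]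
      refine Finset.sum_congr rfl fun b _ => ?_
      have h1 : z ^ (p * b) = (z ^ p) ^ b := by rw [pow_mul]
      have h2 : z ^ (p * p ^ (N - 1)) = (z ^ p) ^ p ^ (N - 1) := by rw [pow_mul]
      rw [h1, h2]
      push_cast
      ring
    have hDtend : Tendsto
        (fun N : ℕ => ∑ a ∈ (Finset.range (p ^ N)).filter (fun a => p ∣ a),
          (a : K) ^ m * (z ^ a * (z ^ p ^ N - 1)⁻¹))
        atTop (nhds ((p : K) ^ m * L2)) := by
      have hcomp : Tendsto
          (fun N : ℕ => ∑ b ∈ Finset.range (p ^ (N - 1)),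
            (b : K) ^ m * (z ^ p) ^ b * ((z ^ p) ^ p ^ (N - 1) - 1)⁻¹)
          atTop (nhds L2) := hL2.comp (tendsto_sub_atTop_nat 1)
      refine (hcomp.const_mul ((p : K) ^ m)).congr' ?_
      filter_upwards [eventually_ge_atTop 1] with N hN
      exact hDclosed N hN
    have hFt : Tendsto
        (fun N : ℕ => ∑ a ∈ (Finset.range (p ^ N)).filter (fun a => ¬ p ∣ a),
          (a : K) ^ m * (z ^ a * (z ^ p ^ N - 1)⁻¹))
        atTop (nhds (L1 - (p : K) ^ m * L2)) := by
      have htot : Tendsto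
          (fun N : ℕ => ∑ a ∈ Finset.range (p ^ N), (a : K) ^ m * (z ^ a * (z ^ p ^ N - 1)⁻¹))
          atTop (nhds L1) :=
        hL1.congr fun N => Finset.sum_congr rfl fun a _ => by ring
      refine (htot.sub hDtend).congr fun N => ?_
      have h := Finset.sum_filter_add_sum_filter_not (Finset.range (p ^ N)) (fun a => p ∣ a)
        (fun a => (a : K) ^ m * (z ^ a * (z ^ p ^ N - 1)⁻¹))
      linear_combination -h
    obtain ⟨h1, h2⟩ := assemble p hp hnorm k hk r hz
      (fun N => (Finset.range (p ^ N)).filter (fun a => ¬ p ∣ a))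
      (fun N => Finset.filter_subset _ _) hFt
    exact ⟨(k : K) * (L1 - (p : K) ^ m * L2), h1, h2⟩
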